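/- If r ≥ 4 is a power of 2, then the polynomial x^r + 1 over 𝔽₃ factors as a product of exactly two irreducible polynomials, each of degree r/2. -/

import Mathlib

open Polynomial

-- 3^(2^k) = 1 + 2^(k+2) + 2^(k+3) t for k ≥ 1
lemma aux_pow_three (k : ℕ) (hk : 1 ≤ k) : ∃ t, 3 ^ 2 ^ k = 1 + 2 ^ (k + 2) + 2 ^ (k + 3) * t := by
  induction k with
  | zero => omega
  | succ k ih =>
    rcases Nat.eq_or_lt_of_le hk with h | h
    · exact ⟨0, by simp [← h]⟩
    · obtain ⟨t, ht⟩ := ih (by omega)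
      refine ⟨t + 2 ^ k + 2 ^ (k + 2) * t + 2 ^ (k + 2) * t ^ 2, ?_⟩
      have : (3:ℕ) ^ 2 ^ (k + 1) = (3 ^ 2 ^ k) ^ 2 := by
        rw [← pow_mul, pow_succ]
      rw [this, ht]
      ring
lemma aux_order (a : ℕ) (ha : 2 ≤ a) (d : ℕ) (hd : 2 ^ (a + 1) ∣ 3 ^ d - 1) :
    2 ^ (a - 1) ∣ d := by
  have hco : Nat.Coprime 3 (2 ^ (a + 1)) := by
    apply Nat.Coprime.pow_right
    decide
  set u : (ZMod (2 ^ (a + 1)))ˣ := ZMod.unitOfCoprime 3 hco with hu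
  have hNeZero : NeZero (2 ^ (a + 1)) := ⟨by positivity⟩
  have key : ∀ m : ℕ, u ^ m = 1 ↔ 2 ^ (a + 1) ∣ 3 ^ m - 1 := by
    intro m
    have h3 : (1:ℕ) ≤ 3 ^ m := Nat.one_le_pow _ _ (by norm_num)
    rw [← ZMod.natCast_eq_zero_iff, Nat.cast_sub h3]
    constructor
    · intro h
      have h' : ((3:ℕ) : ZMod (2 ^ (a + 1))) ^ m = 1 := by
        have := congrArg Units.val h
        simpa [hu, ZMod.coe_unitOfCoprime] using this
      rw [sub_eq_zero, Nat.cast_pow, Nat.cast_one]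
      exact h'
    · intro h
      have h' : ((3:ℕ) : ZMod (2 ^ (a + 1))) ^ m = 1 := by
        rw [sub_eq_zero, Nat.cast_pow, Nat.cast_one] at h; exact h
      ext
      simpa [hu, ZMod.coe_unitOfCoprime] using h'
  have h1 : u ^ 2 ^ (a - 1) = 1 := by
    rw [key]
    obtain ⟨t, ht⟩ := aux_pow_three (a - 1) (by omega)
    have e1 : a - 1 + 2 = a + 1 := by omega
    have e2 : a - 1 + 3 = a + 2 := by omega
    rw [ht, e1, e2]
    refine ⟨1 + 2 * t, ?_⟩
    have hr : 2 ^ (a+1) * (1 + 2 * t) = 2 ^ (a+1) + 2 ^ (a+2) * t := by ring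
    omega
  have h2 : ¬ u ^ 2 ^ (a - 2) = 1 := by
    rw [key]
    rcases Nat.eq_or_lt_of_le ha with h | h
    · simp [← h]
    · obtain ⟨t, ht⟩ := aux_pow_three (a - 2) (by omega)
      have e1 : a - 2 + 2 = a := by omega
      have e2 : a - 2 + 3 = a + 1 := by omega
      rw [ht, e1, e2]
      rintro ⟨c, hc⟩
      have h2a : 0 < 2 ^ a := by positivity
      have r0 : (2:ℕ) ^ (a+1) = 2 ^ a * 2 := by ring
      have r1 : 2 ^ a * (1 + 2 * t) = 2 ^ a + 2 ^ a * 2 * t := by ring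
      have r2 : 2 ^ a * (2 * c) = 2 ^ a * 2 * c := by ring
      rw [r0] at hc
      have h5 : 2 ^ a * (1 + 2 * t) = 2 ^ a * (2 * c) := by omega
      have := Nat.eq_of_mul_eq_mul_left h2a h5
      omega
  have ho1 : orderOf u ∣ 2 ^ (a - 1) := orderOf_dvd_of_pow_eq_one h1
  have ho2 : ¬ orderOf u ∣ 2 ^ (a - 2) := fun h => h2 (orderOf_dvd_iff_pow_eq_one.mp h)
  have : orderOf u = 2 ^ (a - 1) := by
    obtain ⟨j, hj, hje⟩ := (Nat.dvd_prime_pow Nat.prime_two).mp ho1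
    rcases Nat.eq_or_lt_of_le hj with h | h
    · rw [hje, h]
    · exact absurd (hje ▸ pow_dvd_pow 2 (by omega : j ≤ a - 2)) ho2
  rw [← this]
  exact orderOf_dvd_of_pow_eq_one ((key d).mpr hd)

-- every irreducible factor of X^(2^a)+1 over ZMod 3 has degree divisible by 2^(a-1)
lemma aux_factor_deg (a : ℕ) (ha : 2 ≤ a) (p : Polynomial (ZMod 3)) (hp : Irreducible p)
    (hdvd : p ∣ X ^ 2 ^ a + 1) : 2 ^ (a - 1) ∣ p.natDegree := by
  haveI : Fact (Irreducible p) := ⟨hp⟩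
  set F := AdjoinRoot p
  haveI : Module.Finite (ZMod 3) F := PowerBasis.finite (AdjoinRoot.powerBasis hp.ne_zero)
  haveI : Finite F := Module.finite_of_finite (ZMod 3)
  haveI : Fintype F := Fintype.ofFinite F
  have hcard : Fintype.card F = 3 ^ p.natDegree := by
    rw [Module.card_eq_pow_finrank (K := ZMod 3) (V := F), ZMod.card,
      (AdjoinRoot.powerBasis hp.ne_zero).finrank, AdjoinRoot.powerBasis_dim]
  set α : F := AdjoinRoot.root p
  have hroot : α ^ 2 ^ a + 1 = 0 := by
    obtain ⟨q, hq⟩ := hdvd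
    have h0 : (aeval α) p = 0 := by rw [AdjoinRoot.aeval_eq, AdjoinRoot.mk_self]
    have h := congrArg (aeval α) hq
    rw [map_mul, h0, zero_mul] at h
    simpa using h
  have hne : (-1 : F) ≠ 1 := by
    haveI : CharP F 3 := charP_of_injective_algebraMap' (ZMod 3) (A := F) 3
    haveI : Fact (2 < 3) := ⟨by norm_num⟩
    exact CharP.neg_one_ne_one (R := F) 3
  have hα2a : α ^ 2 ^ a = -1 := by linear_combination hroot
  have hα0 : α ≠ 0 := by
    intro h
    rw [h, zero_pow (by positivity)] at hα2a
    exact one_ne_zero (by linear_combination hα2a : (1:F) = 0)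
  have hord : orderOf α = 2 ^ (a + 1) := by
    have hpow1 : α ^ 2 ^ (a + 1) = 1 := by
      rw [pow_succ, pow_mul, hα2a]; ring
    have hpow2 : α ^ 2 ^ a ≠ 1 := by rw [hα2a]; exact hne
    have ho1 : orderOf α ∣ 2 ^ (a + 1) := orderOf_dvd_of_pow_eq_one hpow1
    obtain ⟨j, hj, hje⟩ := (Nat.dvd_prime_pow Nat.prime_two).mp ho1
    rcases Nat.eq_or_lt_of_le hj with h | h
    · rw [hje, h]
    · exact absurd (orderOf_dvd_iff_pow_eq_one.mp (hje ▸ pow_dvd_pow 2 (by omega : j ≤ a))) hpow2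
  have hdvd2 : 2 ^ (a + 1) ∣ 3 ^ p.natDegree - 1 := by
    rw [← hord, ← hcard]
    exact orderOf_dvd_of_pow_eq_one (FiniteField.pow_card_sub_one_eq_one α hα0)
  exact aux_order a ha p.natDegree hdvd2

lemma aux_irred (a : ℕ) (ha : 2 ≤ a) (f : Polynomial (ZMod 3)) (hm : f.Monic)
    (hdeg : f.natDegree = 2 ^ (a - 1)) (hdvd : f ∣ X ^ 2 ^ a + 1) : Irreducible f := by
  have hne0 : f ≠ 0 := hm.ne_zero
  have hnu : ¬ IsUnit f := by
    intro h
    rw [Polynomial.isUnit_iff_degree_eq_zero] at h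
    rw [Polynomial.degree_eq_natDegree hne0, hdeg] at h
    have : (2:ℕ) ^ (a-1) = 0 := by exact_mod_cast h
    simp at this
  obtain ⟨p, hp, hpf⟩ := WfDvdMonoid.exists_irreducible_factor hnu hne0
  have hpdeg : 2 ^ (a - 1) ∣ p.natDegree := aux_factor_deg a ha p hp (hpf.trans hdvd)
  have hple : p.natDegree ≤ f.natDegree := Polynomial.natDegree_le_of_dvd hpf hne0
  have hppos : p.natDegree ≠ 0 := by
    intro h
    have := Polynomial.isUnit_iff_degree_eq_zero.mpr
      (by rw [Polynomial.degree_eq_natDegree hp.ne_zero, h]; rfl)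
    exact hp.not_isUnit this
  have hpeq : p.natDegree = f.natDegree := by
    rw [hdeg] at hple ⊢
    exact Nat.le_antisymm hple (Nat.le_of_dvd (Nat.pos_of_ne_zero hppos) hpdeg)
  obtain ⟨q, hq⟩ := hpf
  have hq0 : q ≠ 0 := by rintro rfl; simp at hq; exact hne0 hq
  have hqdeg : q.natDegree = 0 := by
    have := Polynomial.natDegree_mul hp.ne_zero hq0
    rw [← hq, hpeq] at this
    omega
  have hqu : IsUnit q := Polynomial.isUnit_iff_degree_eq_zero.mpr
    (by rw [Polynomial.degree_eq_natDegree hq0, hqdeg]; rfl)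
  rw [hq]
  exact (irreducible_mul_isUnit hqu).mpr hp

open Polynomial in
theorem stmt_8 (a : ℕ) (ha : 2 ≤ a) :
    ∃ f g : Polynomial (ZMod 3), f.Monic ∧ g.Monic ∧
      Irreducible f ∧ Irreducible g ∧
      f.natDegree = 2 ^ a / 2 ∧ g.natDegree = 2 ^ a / 2 ∧
      f ≠ g ∧ (X ^ (2 ^ a) + 1 : Polynomial (ZMod 3)) = f * g := by
  set m := 2 ^ (a - 2) with hm
  have hm1 : 1 ≤ m := Nat.one_le_two_pow
  have e1 : 2 ^ (a - 1) = 2 * m := by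
    rw [hm, ← pow_succ']
    congr 1; omega
  have e2 : 2 ^ a = 4 * m := by
    have h4 : (4:ℕ) = 2 ^ 2 := rfl
    rw [hm, h4, ← pow_add]
    congr 1; omega
  have e3 : 2 ^ a / 2 = 2 * m := by omega
  set f : Polynomial (ZMod 3) := X ^ (2*m) + (X ^ m - 1) with hf
  set g : Polynomial (ZMod 3) := X ^ (2*m) + (-X ^ m - 1) with hg
  have h3 : (3 : Polynomial (ZMod 3)) = 0 := by
    have : ((3:ℕ) : Polynomial (ZMod 3)) = ((0:ℕ) : Polynomial (ZMod 3)) := by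
      rw [← Polynomial.C_eq_natCast, ← Polynomial.C_eq_natCast]
      norm_num
      decide
    simpa using this
  have hprod : (X ^ (2 ^ a) + 1 : Polynomial (ZMod 3)) = f * g := by
    rw [e2, hf, hg]
    linear_combination (X : Polynomial (ZMod 3)) ^ (2*m) * h3
  have hlt : m < 2 * m := by omega
  have h0lt : 0 < 2 * m := by omega
  have hdegXm : (X ^ m - 1 : Polynomial (ZMod 3)).degree < (2*m : ℕ) := by
    apply lt_of_le_of_lt (Polynomial.degree_sub_le _ _)
    rw [max_lt_iff]
    constructor
    · rw [Polynomial.degree_X_pow]; exact_mod_cast hlt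
    · exact lt_of_le_of_lt Polynomial.degree_one_le (by exact_mod_cast h0lt)
  have hdegXm' : (-X ^ m - 1 : Polynomial (ZMod 3)).degree < (2*m : ℕ) := by
    have hr : (-X ^ m - 1 : Polynomial (ZMod 3)) = -(X ^ m + 1) := by ring
    rw [hr, Polynomial.degree_neg]
    apply lt_of_le_of_lt (Polynomial.degree_add_le _ _)
    rw [max_lt_iff]
    constructor
    · rw [Polynomial.degree_X_pow]; exact_mod_cast hlt
    · exact lt_of_le_of_lt Polynomial.degree_one_le (by exact_mod_cast h0lt)
  have hfm : f.Monic := Polynomial.monic_X_pow_add (by simpa using hdegXm)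
  have hgm : g.Monic := Polynomial.monic_X_pow_add (by simpa using hdegXm')
  have hfd : f.natDegree = 2 * m := by
    rw [hf, Polynomial.natDegree_add_eq_left_of_degree_lt, Polynomial.natDegree_X_pow]
    rwa [Polynomial.degree_X_pow]
  have hgd : g.natDegree = 2 * m := by
    rw [hg, Polynomial.natDegree_add_eq_left_of_degree_lt, Polynomial.natDegree_X_pow]
    rwa [Polynomial.degree_X_pow]
  have hfdvd : f ∣ X ^ (2 ^ a) + 1 := ⟨g, hprod⟩
  have hgdvd : g ∣ X ^ (2 ^ a) + 1 := ⟨f, by rw [hprod]; ring⟩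
  have hfi : Irreducible f := aux_irred a ha f hfm (by rw [hfd, e1]) hfdvd
  have hgi : Irreducible g := aux_irred a ha g hgm (by rw [hgd, e1]) hgdvd
  refine ⟨f, g, hfm, hgm, hfi, hgi, by rw [hfd, e3], by rw [hgd, e3], ?_, hprod⟩
  have hcf : f.coeff m = 1 := by
    simp [hf, Polynomial.coeff_X_pow, Polynomial.coeff_one, (show ¬ m = 2*m by omega), (show ¬ m = 0 by omega)]
  have hcg : g.coeff m = -1 := by
    simp [hg, Polynomial.coeff_X_pow, Polynomial.coeff_one, (show ¬ m = 2*m by omega), (show ¬ m = 0 by omega)]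
  intro h
  have h11 : f.coeff m = g.coeff m := by rw [h]
  rw [hcf, hcg] at h11
  exact absurd h11 (by decide)
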